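/- Let k : Fin 3 → ℝ with k ≠ 0, and let T be the ℝ-linear endomorphism of (Fin 3 → ℝ) × (Fin 3 → ℝ) given by T (E, B) = (k ×₃ B, -(k ×₃ E)), where ×₃ is the cross product on Fin 3 → ℝ. Then T is diagonalizable over ℝ: its eigenvalues are exactly 0, ‖k‖ and -‖k‖ (with ‖k‖ := Real.sqrt (∑ i, (k i)^2)), the eigenspace of 0 is {(a • k, b • k) : a b : ℝ} of dimension 2, the eigenspaces of ‖k‖ and of -‖k‖ each have dimension 2, and the three eigenspaces span the whole 6-dimensional space. -/

import Mathlib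

open Matrix

private def dotL (k : Fin 3 → ℝ) : (Fin 3 → ℝ) →ₗ[ℝ] ℝ where
  toFun x := ∑ i, k i * x i
  map_add' x y := by simp [mul_add, Finset.sum_add_distrib]
  map_smul' c x := by simp [Finset.mul_sum, mul_left_comm]

private lemma dotL_apply (k x : Fin 3 → ℝ) : dotL k x = ∑ i, k i * x i := rfl

private lemma bac_cab (k x : Fin 3 → ℝ) :
    k ⨯₃ (k ⨯₃ x) = (dotL k x) • k - (dotL k k) • x := by
  funext i
  fin_cases i <;> simp [cross_apply, dotL_apply, Fin.sum_univ_three] <;> ring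

private lemma dotL_cross (k x : Fin 3 → ℝ) : dotL k (k ⨯₃ x) = 0 := by
  simp [cross_apply, dotL_apply, Fin.sum_univ_three]; ring

private lemma cross_par (k x : Fin 3 → ℝ) (hk : k ≠ 0) (h : k ⨯₃ x = 0) : ∃ a : ℝ, x = a • k := by
  have h0 := congrFun h 0
  have h1 := congrFun h 1
  have h2 := congrFun h 2
  simp [cross_apply] at h0 h1 h2
  rw [Function.ne_iff] at hk
  obtain ⟨i, hi⟩ := hk
  refine ⟨x i / k i, ?_⟩
  funext j
  simp only [Pi.zero_apply] at hi
  fin_cases i <;> fin_cases j <;>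
    simp only [Fin.zero_eta, Fin.mk_one, Fin.reduceFinMk, Fin.isValue, Pi.smul_apply,
      smul_eq_mul] at hi ⊢ <;>
    field_simp <;> linarith [h0, h1, h2]

private lemma exists_perp (k : Fin 3 → ℝ) (hk : k ≠ 0) :
    ∃ E : Fin 3 → ℝ, E ≠ 0 ∧ dotL k E = 0 := by
  rw [Function.ne_iff] at hk
  obtain ⟨i, hi⟩ := hk
  simp only [Pi.zero_apply] at hi
  fin_cases i
  · refine ⟨![k 1, -(k 0), 0], ?_, by simp [dotL_apply, Fin.sum_univ_three]; ring⟩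
    intro h
    have h1 := congrFun h 1
    simp at h1
    exact hi h1
  · refine ⟨![-(k 1), k 0, 0], ?_, by simp [dotL_apply, Fin.sum_univ_three]; ring⟩
    intro h
    have h1 := congrFun h 0
    simp at h1
    exact hi h1
  · refine ⟨![0, k 2, -(k 1)], ?_, by simp [dotL_apply, Fin.sum_univ_three]; ring⟩
    intro h
    have h1 := congrFun h 1
    simp at h1
    exact hi h1

private def pairMap (k : Fin 3 → ℝ) : (ℝ × ℝ) →ₗ[ℝ] ((Fin 3 → ℝ) × (Fin 3 → ℝ)) where
  toFun p := (p.1 • k, p.2 • k)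
  map_add' p q := by simp [add_smul]
  map_smul' c p := by
    refine Prod.ext ?_ ?_ <;>
      simp only [Prod.smul_fst, Prod.smul_snd, smul_eq_mul, RingHom.id_apply] <;>
      rw [mul_smul]

private def waveMap (k : Fin 3 → ℝ) (c : ℝ) : (Fin 3 → ℝ) →ₗ[ℝ] ((Fin 3 → ℝ) × (Fin 3 → ℝ)) where
  toFun E := (E, c • (k ⨯₃ E))
  map_add' x y := by simp
  map_smul' a x := by
    refine Prod.ext rfl ?_
    simp only [RingHom.id_apply, Prod.smul_snd, LinearMap.map_smul]
    exact smul_comm c a _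

theorem stmt_16 (k : Fin 3 → ℝ) (hk : k ≠ 0)
    (T : ((Fin 3 → ℝ) × (Fin 3 → ℝ)) →ₗ[ℝ] ((Fin 3 → ℝ) × (Fin 3 → ℝ)))
    (hT : ∀ EB : (Fin 3 → ℝ) × (Fin 3 → ℝ), T EB = (k ⨯₃ EB.2, -(k ⨯₃ EB.1)))
    (nk : ℝ) (hnk : nk = Real.sqrt (∑ i, (k i) ^ 2)) :
    (∀ μ : ℝ, Module.End.HasEigenvalue T μ ↔ (μ = 0 ∨ μ = nk ∨ μ = -nk)) ∧
    (Module.End.eigenspace T 0 : Set ((Fin 3 → ℝ) × (Fin 3 → ℝ)))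
      = {p | ∃ a b : ℝ, p = (a • k, b • k)} ∧
    Module.finrank ℝ (Module.End.eigenspace T 0) = 2 ∧
    Module.finrank ℝ (Module.End.eigenspace T nk) = 2 ∧
    Module.finrank ℝ (Module.End.eigenspace T (-nk)) = 2 ∧
    Module.End.eigenspace T 0 ⊔ Module.End.eigenspace T nk
      ⊔ Module.End.eigenspace T (-nk) = ⊤ := by
  have hpos : (0:ℝ) < ∑ i, (k i)^2 := by
    obtain ⟨i, hi⟩ := Function.ne_iff.mp hk
    simp only [Pi.zero_apply] at hi
    exact Finset.sum_pos' (fun j _ => sq_nonneg _) ⟨i, Finset.mem_univ i, by positivity⟩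
  have hn0 : 0 < nk := hnk ▸ Real.sqrt_pos.mpr hpos
  have hne : nk ≠ 0 := ne_of_gt hn0
  have hn2 : nk^2 = dotL k k := by
    rw [hnk, Real.sq_sqrt hpos.le, dotL_apply]
    exact Finset.sum_congr rfl (fun i _ => pow_two (k i))
  -- membership characterization
  have hmem : ∀ (μ : ℝ) (E B : Fin 3 → ℝ),
      ((E, B) ∈ Module.End.eigenspace T μ) ↔ (k ⨯₃ B = μ • E ∧ -(k ⨯₃ E) = μ • B) := by
    intro μ E B
    rw [Module.End.mem_eigenspace_iff, hT]
    simp [Prod.ext_iff]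
  -- eigenspace of nonzero eigenvalues
  have hchar : ∀ μ : ℝ, μ ≠ 0 → μ^2 = nk^2 →
      Module.End.eigenspace T μ
        = Submodule.map (waveMap k (-(μ/nk^2))) (LinearMap.ker (dotL k)) := by
    intro μ hμ hμ2
    have hsc : μ * -(μ/nk^2) = -1 := by field_simp; linear_combination -hμ2
    ext ⟨E, B⟩
    rw [hmem]
    constructor
    · rintro ⟨h1, h2⟩
      have hdE : dotL k E = 0 := by
        have h3 := congrArg (dotL k) h1
        rw [dotL_cross, LinearMap.map_smul, smul_eq_mul] at h3
        exact (mul_eq_zero.mp h3.symm).resolve_left hμ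
      have hB : B = (-(μ/nk^2)) • (k ⨯₃ E) := by
        apply smul_right_injective (Fin 3 → ℝ) hμ
        show μ • B = μ • _
        rw [← h2, smul_smul, hsc, neg_one_smul]
      exact ⟨E, hdE, by rw [show waveMap k (-(μ/nk^2)) E = (E, (-(μ/nk^2)) • (k ⨯₃ E)) from rfl, hB]⟩
    · rintro ⟨E', hE', hEq⟩
      have hdE' : dotL k E' = 0 := hE'
      have hE : E = E' := (congrArg Prod.fst hEq).symm
      subst hE
      have hB : B = (-(μ/nk^2)) • (k ⨯₃ E) := (congrArg Prod.snd hEq).symm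
      subst hB
      refine ⟨?_, ?_⟩
      · rw [LinearMap.map_smul, bac_cab, hdE', zero_smul, zero_sub, ← hn2, smul_neg, smul_smul]
        have hc : -(μ/nk^2) * nk^2 = -μ := by field_simp
        rw [hc, neg_smul, neg_neg]
      · rw [smul_smul, hsc, neg_one_smul]
  -- existence of eigenvalues nk and -nk
  have hev : ∀ μ : ℝ, μ ≠ 0 → μ^2 = nk^2 → Module.End.HasEigenvalue T μ := by
    intro μ hμ hμ2
    obtain ⟨E, hE0, hEd⟩ := exists_perp k hk
    have hx : waveMap k (-(μ/nk^2)) E ∈ Module.End.eigenspace T μ := by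
      rw [hchar μ hμ hμ2]
      exact ⟨E, hEd, rfl⟩
    exact Module.End.hasEigenvalue_of_hasEigenvector ⟨hx, fun h => hE0 (congrArg Prod.fst h)⟩
  -- eigenvalue 0
  have hev0 : Module.End.HasEigenvalue T 0 := by
    have hx : ((k, 0) : (Fin 3 → ℝ) × (Fin 3 → ℝ)) ∈ Module.End.eigenspace T 0 := by
      rw [hmem]
      exact ⟨by simp, by simp [cross_self]⟩
    exact Module.End.hasEigenvalue_of_hasEigenvector ⟨hx, fun h => hk (congrArg Prod.fst h)⟩
  -- no other eigenvalues
  have honly : ∀ μ : ℝ, Module.End.HasEigenvalue T μ → (μ = 0 ∨ μ = nk ∨ μ = -nk) := by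
    intro μ hμ
    by_contra hcon
    push_neg at hcon
    obtain ⟨hμ0, hμp, hμm⟩ := hcon
    have hμ2 : μ^2 - nk^2 ≠ 0 := by
      intro h
      rcases mul_eq_zero.mp (show (μ - nk) * (μ + nk) = 0 by linear_combination h) with h' | h'
      · exact hμp (by linarith)
      · exact hμm (by linarith)
    obtain ⟨⟨E, B⟩, hv, hv0⟩ := hμ.exists_hasEigenvector
    obtain ⟨h1, h2⟩ := (hmem μ E B).mp hv
    have hce : k ⨯₃ (k ⨯₃ E) = (-(μ^2)) • E := by
      have hkE : k ⨯₃ E = (-μ) • B := by rw [neg_smul, ← h2, neg_neg]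
      rw [hkE, LinearMap.map_smul, h1, smul_smul]
      rw [show -μ * μ = -(μ^2) by ring]
    have hkey : (dotL k E) • k = (nk^2 - μ^2) • E := by
      have := bac_cab k E
      rw [hce, ← hn2] at this
      have h4 : (dotL k E) • k - nk^2 • E = (-(μ^2)) • E := this.symm
      linear_combination (norm := module) h4
    have hdE : dotL k E = 0 := by
      have h5 := congrArg (dotL k) hkey
      rw [LinearMap.map_smul, LinearMap.map_smul, ← hn2, smul_eq_mul, smul_eq_mul] at h5
      -- h5 : dotL k E * nk^2 = (nk^2 - μ^2) * dotL k E
      have h6 : μ^2 * dotL k E = 0 := by linear_combination h5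
      rcases mul_eq_zero.mp h6 with h' | h'
      · exact absurd (pow_eq_zero_iff (n := 2) (by norm_num) |>.mp h') hμ0
      · exact h'
    have hE : E = 0 := by
      rw [hdE, zero_smul] at hkey
      rcases smul_eq_zero.mp hkey.symm with h' | h'
      · exact absurd (by linarith : μ^2 - nk^2 = 0) hμ2
      · exact h'
    have hB : B = 0 := by
      rw [hE] at h2
      simp only [map_zero, neg_zero] at h2
      rcases smul_eq_zero.mp h2.symm with h' | h'
      · exact absurd h' hμ0
      · exact h'
    exact hv0 (by rw [hE, hB]; rfl)
  -- the set description of eigenspace 0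
  have hset : (Module.End.eigenspace T 0 : Set ((Fin 3 → ℝ) × (Fin 3 → ℝ)))
      = {p | ∃ a b : ℝ, p = (a • k, b • k)} := by
    ext ⟨E, B⟩
    simp only [SetLike.mem_coe, Set.mem_setOf_eq]
    rw [hmem]
    constructor
    · rintro ⟨h1, h2⟩
      simp only [zero_smul] at h1 h2
      obtain ⟨b, rfl⟩ := cross_par k B hk h1
      obtain ⟨a, rfl⟩ := cross_par k E hk (by rwa [neg_eq_zero] at h2)
      exact ⟨a, b, rfl⟩
    · rintro ⟨a, b, h⟩
      obtain ⟨h1, h2⟩ := Prod.ext_iff.mp h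
      simp only at h1 h2
      subst h1; subst h2
      constructor <;> simp [LinearMap.map_smul, cross_self]
  -- finrank of eigenspace 0
  have hr0 : Module.finrank ℝ (Module.End.eigenspace T 0) = 2 := by
    have hrange : Module.End.eigenspace T 0 = LinearMap.range (pairMap k) := by
      ext p
      rw [← SetLike.mem_coe, hset]
      constructor
      · rintro ⟨a, b, rfl⟩
        exact ⟨(a, b), rfl⟩
      · rintro ⟨⟨a, b⟩, rfl⟩
        exact ⟨a, b, rfl⟩
    have hinj : Function.Injective (pairMap k) := by
      intro p q h
      have h1 := congrArg Prod.fst h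
      have h2 := congrArg Prod.snd h
      simp only [pairMap, LinearMap.coe_mk, AddHom.coe_mk] at h1 h2
      have e1 : p.1 = q.1 := smul_left_injective ℝ hk h1
      have e2 : p.2 = q.2 := smul_left_injective ℝ hk h2
      exact Prod.ext e1 e2
    rw [hrange, LinearMap.finrank_range_of_inj hinj]
    simp [Module.finrank_prod]
  -- finrank of eigenspaces ±nk
  have hker2 : Module.finrank ℝ (LinearMap.ker (dotL k)) = 2 := by
    have hsurj : LinearMap.range (dotL k) = ⊤ := by
      rw [LinearMap.range_eq_top]
      intro r
      refine ⟨(r/(nk^2)) • k, ?_⟩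
      rw [LinearMap.map_smul, smul_eq_mul, ← hn2]
      field_simp
    have hrn := LinearMap.finrank_range_add_finrank_ker (dotL k)
    rw [hsurj, finrank_top] at hrn
    simp only [Module.finrank_self, Module.finrank_fin_fun] at hrn
    omega
  have hrpm : ∀ μ : ℝ, μ ≠ 0 → μ^2 = nk^2 →
      Module.finrank ℝ (Module.End.eigenspace T μ) = 2 := by
    intro μ hμ hμ2
    rw [hchar μ hμ hμ2]
    have hinj : Function.Injective (waveMap k (-(μ/nk^2))) := by
      intro x y h
      exact congrArg Prod.fst h
    exact (Submodule.equivMapOfInjective _ hinj _).finrank_eq.symm.trans hker2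
  refine ⟨?_, hset, hr0, hrpm nk hne rfl, hrpm (-nk) (by simpa using hne) (by ring), ?_⟩
  · intro μ
    constructor
    · exact honly μ
    · rintro (rfl | h | h)
      · exact hev0
      · rw [h]; exact hev nk hne rfl
      · rw [h]; exact hev (-nk) (by simpa using hne) (by ring)
  · rw [eq_top_iff]
    rintro ⟨E, B⟩ -
    set a : ℝ := dotL k E / nk^2 with ha
    set b : ℝ := dotL k B / nk^2 with hb
    set E' : Fin 3 → ℝ := E - a • k with hE'
    set B' : Fin 3 → ℝ := B - b • k with hB'
    have hdE' : dotL k E' = 0 := by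
      rw [hE', map_sub, LinearMap.map_smul, smul_eq_mul, ha, ← hn2]
      field_simp; ring
    have hdB' : dotL k B' = 0 := by
      rw [hB', map_sub, LinearMap.map_smul, smul_eq_mul, hb, ← hn2]
      field_simp; ring
    set ep : Fin 3 → ℝ := (1/2 : ℝ) • (E' + (1/nk) • (k ⨯₃ B')) with hep
    set em : Fin 3 → ℝ := (1/2 : ℝ) • (E' - (1/nk) • (k ⨯₃ B')) with hem
    have hdep : dotL k ep = 0 := by
      rw [hep]
      simp [map_add, map_sub, LinearMap.map_smul, dotL_cross, hdE']
    have hdem : dotL k em = 0 := by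
      rw [hem]
      simp [map_add, map_sub, LinearMap.map_smul, dotL_cross, hdE']
    have m0 : ((a • k, b • k) : (Fin 3 → ℝ) × (Fin 3 → ℝ)) ∈ Module.End.eigenspace T 0 := by
      rw [hmem]
      exact ⟨by simp [LinearMap.map_smul, cross_self], by simp [LinearMap.map_smul, cross_self]⟩
    have mp : waveMap k (-(nk/nk^2)) ep ∈ Module.End.eigenspace T nk := by
      rw [hchar nk hne rfl]
      exact ⟨ep, hdep, rfl⟩
    have mm : waveMap k (-(-nk/nk^2)) em ∈ Module.End.eigenspace T (-nk) := by
      rw [hchar (-nk) (by simpa using hne) (by ring)]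
      exact ⟨em, hdem, rfl⟩
    have hcc : k ⨯₃ (k ⨯₃ B') = (-(nk^2)) • B' := by
      rw [bac_cab, hdB', ← hn2, zero_smul, zero_sub, neg_smul]
    have c1 : E = a • k + ep + em := by
      rw [hep, hem, hE']
      module
    have c2 : B = b • k + (-(nk/nk^2)) • (k ⨯₃ ep) + (-(-nk/nk^2)) • (k ⨯₃ em) := by
      rw [hep, hem]
      simp only [map_add, map_sub, LinearMap.map_smul, hcc]
      rw [hB']
      match_scalars <;> field_simp <;> ring
    have hsum : ((E, B) : (Fin 3 → ℝ) × (Fin 3 → ℝ))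
        = (a • k, b • k) + waveMap k (-(nk/nk^2)) ep + waveMap k (-(-nk/nk^2)) em :=
      Prod.ext c1 c2
    rw [hsum]
    exact add_mem (add_mem
        (Submodule.mem_sup_left (Submodule.mem_sup_left m0))
        (Submodule.mem_sup_left (Submodule.mem_sup_right mp)))
      (Submodule.mem_sup_right mm)
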